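/- Let X be a T1 topological space without isolated points and let f : X → X be continuous. If there exists a point x₀ ∈ X whose forward orbit {f^[n] x₀ : n ∈ ℕ} is dense in X, then f is topologically transitive: for all nonempty open sets U, V ⊆ X there exists n ∈ ℕ such that f^[n] '' U ∩ V ≠ ∅. -/

import Mathlib

lemma interior_union_empty {X : Type*} [TopologicalSpace X] {A B : Set X}
    (hA : IsClosed A) (hB : IsClosed B) (hiA : interior A = ∅) (hiB : interior B = ∅) :
    interior (A ∪ B) = ∅ := by
  have h1 : interior (A ∪ B) \ B ⊆ interior A := by
    apply interior_maximal
    · intro x hx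
      rcases interior_subset hx.1 with h | h
      · exact h
      · exact absurd h hx.2
    · exact isOpen_interior.sdiff hB
  have h2 : interior (A ∪ B) ⊆ B := by
    intro x hx
    by_contra h
    exact absurd (h1 ⟨hx, h⟩) (by simp [hiA])
  have h3 : interior (A ∪ B) ⊆ interior B := interior_maximal h2 isOpen_interior
  rw [hiB] at h3
  exact Set.eq_empty_iff_forall_notMem.2 fun x hx => h3 hx

lemma finite_interior_empty {X : Type*} [TopologicalSpace X] [T1Space X]
    (hperf : ∀ x : X, interior ({x} : Set X) = ∅) {s : Set X} (hs : s.Finite) :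
    interior s = ∅ := by
  refine hs.induction_on (motive := fun s _ => interior s = ∅) s (by simp) ?_
  intro a t _ ht ih
  have : insert a t = ({a} : Set X) ∪ t := by simp
  rw [this]
  exact interior_union_empty isClosed_singleton ht.isClosed (hperf a) ih

theorem dense_orbit_implies_transitive {X : Type*} [TopologicalSpace X] [T1Space X]
    (hperf : ∀ x : X, interior ({x} : Set X) = ∅)
    (f : X → X) (hf : Continuous f)
    (x₀ : X) (hx₀ : Dense (Set.range fun n : ℕ => f^[n] x₀)) :
    ∀ U V : Set X, IsOpen U → IsOpen V → U.Nonempty → V.Nonempty →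
      ∃ n : ℕ, (f^[n] '' U ∩ V).Nonempty := by
  intro U V hU hV hUne hVne
  -- the orbit meets U
  obtain ⟨_, ⟨m, rfl⟩, hmU⟩ :=
    hx₀.exists_mem_open hU hUne
  -- consider V minus the first m+1 orbit points
  set F : Set X := (fun n : ℕ => f^[n] x₀) '' (Set.Iic m) with hF
  have hFfin : F.Finite := (Set.finite_Iic m).image _
  have hV' : IsOpen (V \ F) := hV.sdiff hFfin.isClosed
  have hV'ne : (V \ F).Nonempty := by
    by_contra h
    rw [Set.not_nonempty_iff_eq_empty, Set.diff_eq_empty] at h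
    have := interior_maximal h hV
    rw [finite_interior_empty hperf hFfin] at this
    obtain ⟨v, hv⟩ := hVne
    exact this (hv)
  obtain ⟨_, ⟨n, rfl⟩, hnV⟩ := hx₀.exists_mem_open hV' hV'ne
  have hnm : m < n := by
    by_contra h
    push_neg at h
    exact hnV.2 ⟨n, h, rfl⟩
  refine ⟨n - m, f^[n] x₀, ⟨f^[m] x₀, hmU, ?_⟩, hnV.1⟩
  rw [← Function.iterate_add_apply]
  congr 1
  omega
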